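/- Fix i \in \{1,2\} and suppose \alpha_i \in (0,1) and \varphi_i = (1-\alpha_i)\beta_i < 2\log 2, and let x_0 be the unique maximizer of g_{\alpha_i} on [0,1]. Then for every p = (p_1,p_2) \in [0,1]^2 with p_1 + p_2 \le 1 and p_i \le \bar{p}_i we have f_i(p) < x_0. In particular g_{\alpha_i}'(f_i(p)) \ge 0 for all p \in [0,\bar{p}_1] \times [0,\bar{p}_2]. -/

import Mathlib

/-- `g α x` : the expected density after the epidemic stage on a percolated 3-tree. -/
noncomputable def g (α x : ℝ) : ℝ :=
  if x = 0 then 0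
  else (1 - Real.sqrt (1 - 4 * (1 - α) * x * (1 - x))) ^ 3 / (8 * (1 - α) ^ 2 * x ^ 2)

/-- The growth map `f_i(p) = (1 - e^{-Σ_p}) β_i p_i / Σ_p`  (with `f_i(0,0) = 0`),
where `Σ_p = β 0 * p 0 + β 1 * p 1`.  Types are indexed by `Fin 2`. -/
noncomputable def fm (β : Fin 2 → ℝ) (i : Fin 2) (p : Fin 2 → ℝ) : ℝ :=
  if β 0 * p 0 + β 1 * p 1 = 0 then 0
  else (1 - Real.exp (-(β 0 * p 0 + β 1 * p 1))) * (β i * p i) / (β 0 * p 0 + β 1 * p 1)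

/-- `pbar α = sup_{x ∈ [0,1]} g α x`, the maximal density after an epidemic stage. -/
noncomputable def pbar (α : ℝ) : ℝ := sSup (g α '' Set.Icc 0 1)

open Real Set

namespace Stmt4Aux

noncomputable def Sa (a x : ℝ) : ℝ := Real.sqrt (1 - 4 * (1 - a) * x * (1 - x))

noncomputable def Da (a x : ℝ) : ℝ :=
  4 * (1 - a) * (1 - x) ^ 2 * (3 - 6 * x - (1 + 2 * x) * Sa a x) / ((1 + Sa a x) ^ 3 * Sa a x)

lemma rad_pos {a : ℝ} (h0 : 0 < a) (h1 : a < 1) (x : ℝ) :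
    0 < 1 - 4 * (1 - a) * x * (1 - x) := by nlinarith [sq_nonneg (1 - 2 * x)]

lemma Sa_pos {a : ℝ} (h0 : 0 < a) (h1 : a < 1) (x : ℝ) : 0 < Sa a x :=
  Real.sqrt_pos.2 (rad_pos h0 h1 x)

lemma Sa_sq {a : ℝ} (h0 : 0 < a) (h1 : a < 1) (x : ℝ) :
    Sa a x ^ 2 = 1 - 4 * (1 - a) * x * (1 - x) :=
  Real.sq_sqrt (rad_pos h0 h1 x).le

lemma Sa_cont (a : ℝ) : Continuous (Sa a) := by
  unfold Sa
  fun_prop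

lemma Da_cont {a : ℝ} (h0 : 0 < a) (h1 : a < 1) : Continuous (Da a) := by
  unfold Da
  apply Continuous.div
  · have := Sa_cont a
    fun_prop
  · have := Sa_cont a
    fun_prop
  · intro x
    have h1S := Sa_pos h0 h1 x
    positivity

lemma Sa_zero (a : ℝ) : Sa a 0 = 1 := by
  rw [Sa]
  norm_num

lemma Da_zero (a : ℝ) : Da a 0 = 1 - a := by
  rw [Da, Sa_zero]
  norm_num
  ring

lemma crit {a x : ℝ} (h0 : 0 < a) (h1 : a < 1) (hx0 : 0 < x) (hx1 : x < 1)
    (hD : Da a x = 0) :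
    (1 + 2 * x) * Sa a x = 3 - 6 * x ∧ (1 - a) * x * (2 * x + 1) ^ 2 = 2 * (4 * x - 1) := by
  have hSpos := Sa_pos h0 h1 x
  have hS2 := Sa_sq h0 h1 x
  have hden : ((1 + Sa a x) ^ 3 * Sa a x) ≠ 0 := by positivity
  rw [Da, div_eq_zero_iff] at hD
  rcases hD with hD | hD
  swap
  · exact absurd hD hden
  have hfac : (4 * (1 - a) * (1 - x) ^ 2) ≠ 0 := by
    have : (1:ℝ) - a > 0 := by linarith
    have : (1:ℝ) - x > 0 := by linarith
    positivity
  have h3 : 3 - 6 * x - (1 + 2 * x) * Sa a x = 0 := by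
    rcases mul_eq_zero.mp hD with h | h
    · exact absurd h hfac
    · exact h
  have hlin : (1 + 2 * x) * Sa a x = 3 - 6 * x := by linarith
  refine ⟨hlin, ?_⟩
  have hsq : ((1 + 2 * x) * Sa a x) ^ 2 = (3 - 6 * x) ^ 2 := by rw [hlin]
  have key : (1 - x) * ((1 - a) * x * (2 * x + 1) ^ 2 - 2 * (4 * x - 1)) = 0 := by
    linear_combination (-(1/4 : ℝ)) * hsq + ((1 + 2*x)^2/4) * hS2
  have hxne : (1:ℝ) - x ≠ 0 := by intro h; nlinarith
  have := (mul_eq_zero.mp key).resolve_left hxne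
  linarith

lemma g_eq {a : ℝ} (h0 : 0 < a) (h1 : a < 1) (x : ℝ) :
    g a x = 8 * (1 - a) * x * (1 - x) ^ 3 / (1 + Sa a x) ^ 3 := by
  have hS2 := Sa_sq h0 h1 x
  have hSpos := Sa_pos h0 h1 x
  have h1S : (0:ℝ) < 1 + Sa a x := by linarith
  rcases eq_or_ne x 0 with rfl | hx
  · simp [g]
  · have ha' : (1:ℝ) - a ≠ 0 := by linarith
    have hden : (8*(1-a)^2*x^2) ≠ 0 := by positivity
    rw [g, if_neg hx, div_eq_div_iff hden (by positivity)]
    have e : Real.sqrt (1 - 4 * (1 - a) * x * (1 - x)) = Sa a x := by rw [Sa]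
    rw [e]
    linear_combination (-((1 - Sa a x ^ 2)^2 + (1 - Sa a x ^2)*(4*(1-a)*x*(1-x)) + (4*(1-a)*x*(1-x))^2)) * hS2


set_option maxHeartbeats 1000000 in
lemma hasDerivAt_g {a : ℝ} (h0 : 0 < a) (h1 : a < 1) (x : ℝ) :
    HasDerivAt (g a) (Da a x) x := by
  have hSpos := Sa_pos h0 h1 x
  have hS2 := Sa_sq h0 h1 x
  have hradpos := rad_pos h0 h1 x
  have h1S : (0:ℝ) < 1 + Sa a x := by linarith
  have e : Real.sqrt (1 - 4 * (1 - a) * x * (1 - x)) = Sa a x := by rw [Sa]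
  have hrad : HasDerivAt (fun y : ℝ => 1 - 4 * (1 - a) * y * (1 - y))
      (-4 * (1 - a) * (1 - 2 * x)) x := by
    have h := HasDerivAt.const_sub (1:ℝ)
      ((HasDerivAt.const_mul (4*(1-a)) (hasDerivAt_id' x)).fun_mul
        ((hasDerivAt_const x (1:ℝ)).sub (hasDerivAt_id' x)))
    refine h.congr_deriv ?_
    simp only [Pi.sub_apply]
    ring
  have hS : HasDerivAt (fun y : ℝ => Real.sqrt (1 - 4 * (1 - a) * y * (1 - y)))
      ((-4 * (1 - a) * (1 - 2 * x)) / (2 * Sa a x)) x := by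
    have h := hrad.sqrt (ne_of_gt hradpos)
    rwa [e] at h
  have hnum : HasDerivAt (fun y : ℝ => 8 * (1 - a) * y * (1 - y) ^ 3)
      (8 * (1 - a) * (1 - x) ^ 3 - 24 * (1 - a) * x * (1 - x) ^ 2) x := by
    have h := (HasDerivAt.const_mul (8*(1-a)) (hasDerivAt_id' x)).fun_mul
      (((hasDerivAt_const x (1:ℝ)).sub (hasDerivAt_id' x)).fun_pow 3)
    refine h.congr_deriv ?_
    simp only [Pi.sub_apply]
    ring
  have hden : HasDerivAt (fun y : ℝ => (1 + Real.sqrt (1 - 4 * (1 - a) * y * (1 - y))) ^ 3)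
      (3 * (1 + Sa a x) ^ 2 * ((-4 * (1 - a) * (1 - 2 * x)) / (2 * Sa a x))) x := by
    have h := (hS.const_add 1).fun_pow 3
    refine h.congr_deriv ?_
    rw [e]
    norm_num
  have hfun : g a = fun y : ℝ =>
      8 * (1 - a) * y * (1 - y) ^ 3 / (1 + Real.sqrt (1 - 4 * (1 - a) * y * (1 - y))) ^ 3 := by
    funext y
    rw [g_eq h0 h1 y, Sa]
  have hraw := HasDerivAt.fun_div hnum hden (by rw [e]; positivity)
  rw [e] at hraw
  rw [hfun]
  refine hraw.congr_deriv ?_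
  symm
  rw [Da]
  have h2S : (2:ℝ) * Sa a x ≠ 0 := by positivity
  rw [div_eq_div_iff (by positivity) (by positivity), ← mul_div_assoc, ← mul_div_assoc,
    sub_div' h2S, div_mul_eq_mul_div, eq_div_iff h2S]
  linear_combination (-24*(1-a)*Sa a x*(1+Sa a x)^5*(1-2*x)*(1-x)^2) * hS2



lemma log_le_cubic {z : ℝ} (hz : 0 ≤ z) :
    Real.log (1 + z) ≤ z - z ^ 2 / 2 + z ^ 3 / 3 := by
  set F : ℝ → ℝ := fun t => t - t ^ 2 / 2 + t ^ 3 / 3 - Real.log (1 + t) with hF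
  have hdF : ∀ t : ℝ, 0 < 1 + t →
      HasDerivAt F (1 - 2 * t / 2 + 3 * t ^ 2 / 3 - 1 / (1 + t)) t := by
    intro t ht'
    have hlog : HasDerivAt (fun y : ℝ => Real.log (1 + y)) (1 / (1 + t)) t := by
      have h := (HasDerivAt.const_add (1:ℝ) (hasDerivAt_id' t)).log (by linarith)
      simpa using h
    have h1 : HasDerivAt (fun y : ℝ => y - y ^ 2 / 2 + y ^ 3 / 3)
        (1 - 2 * t / 2 + 3 * t ^ 2 / 3) t := by
      have h := ((hasDerivAt_id' t).sub (((hasDerivAt_id' t).fun_pow 2).div_const 2)).add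
        (((hasDerivAt_id' t).fun_pow 3).div_const 3)
      refine h.congr_deriv ?_
      push_cast
      ring
    exact h1.sub hlog
  have key : ∀ t ∈ Set.Ici (0:ℝ), 0 ≤ F t := by
    have hcont : ContinuousOn F (Set.Ici 0) := by
      apply ContinuousOn.sub
      · fun_prop
      · apply ContinuousOn.log
        · fun_prop
        · intro t ht
          simp at ht
          positivity
    have hmono : MonotoneOn F (Set.Ici 0) := by
      apply monotoneOn_of_deriv_nonneg (convex_Ici 0) hcont
      · intro t ht
        rw [interior_Ici] at ht
        have ht0 : (0:ℝ) < t := ht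
        exact (hdF t (by linarith)).differentiableAt.differentiableWithinAt
      · intro t ht
        rw [interior_Ici] at ht
        have ht0 : (0:ℝ) < t := ht
        rw [(hdF t (by linarith)).deriv]
        rw [sub_nonneg, div_le_iff₀ (by linarith : (0:ℝ) < 1 + t)]
        nlinarith [pow_nonneg ht0.le 3]
    intro t ht
    have h0 : F 0 = 0 := by simp [hF]
    have := hmono (Set.self_mem_Ici) ht ht
    rw [h0] at this
    exact this
  have := key z hz
  simp only [hF] at this
  linarith

lemma log_ineq {x : ℝ} (h4 : 1 / 4 < x) (h2 : x < 1 / 2) :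
    Real.log 2 * (x * (2 * x + 1) ^ 3) ≤ -4 * Real.log (1 - x) := by
  set z : ℝ := 1 - 2 * x with hzdef
  have hz0 : 0 ≤ z := by simp [hzdef]; linarith
  have hz2 : z ≤ 1 / 2 := by simp [hzdef]; linarith
  have hx : x = (1 - z) / 2 := by rw [hzdef]; ring
  have hlog : Real.log (1 - x) = Real.log (1 + z) - Real.log 2 := by
    rw [show (1:ℝ) - x = (1 + z) / 2 by rw [hx]; ring]
    rw [Real.log_div (by linarith) (by norm_num)]
  have hcube := log_le_cubic hz0
  have hL1 : (0.6931471803 : ℝ) < Real.log 2 := Real.log_two_gt_d9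
  have hL2 : Real.log 2 < 0.6931471808 := Real.log_two_lt_d9
  rw [hlog, hx]
  have hB : 0 ≤ 10 * Real.log 2 - 4 + (2 - 9 * Real.log 2) * z
      + (7 / 2 * Real.log 2 - 4 / 3) * z ^ 2 - Real.log 2 / 2 * z ^ 3 := by
    nlinarith [mul_nonneg (mul_nonneg hz0 hz0) (sub_nonneg.2 hz2),
      mul_nonneg hz0 (sub_nonneg.2 hz2), sq_nonneg z, hL1, hL2]
  nlinarith [mul_nonneg hz0 hB]

lemma exp_frac {aa Sg : ℝ} (h0 : 0 < aa) (hle : aa ≤ Sg) :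
    (1 - Real.exp (-Sg)) * aa / Sg ≤ 1 - Real.exp (-aa) := by
  have hSgp : 0 < Sg := lt_of_lt_of_le h0 hle
  set t : ℝ := aa / Sg with htdef
  have ht0 : 0 ≤ t := by positivity
  have ht1 : t ≤ 1 := by rw [htdef, div_le_one hSgp]; exact hle
  have haa : aa = t * Sg := by rw [htdef]; field_simp
  have hcv := convexOn_exp.2 (Set.mem_univ (-Sg)) (Set.mem_univ (0:ℝ)) ht0
    (by linarith : (0:ℝ) ≤ 1 - t) (by ring)
  simp only [smul_eq_mul, mul_zero, add_zero, Real.exp_zero, mul_one] at hcv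
  rw [show t * -Sg = -(t * Sg) by ring] at hcv
  rw [haa, show (1 - Real.exp (-Sg)) * (t * Sg) / Sg = (1 - Real.exp (-Sg)) * t from by
    field_simp]
  nlinarith [hcv]


lemma Sa_symm (a x : ℝ) : Sa a (1 - x) = Sa a x := by
  rw [Sa, Sa]
  congr 1
  ring

lemma main_ineq {a : ℝ} (h0 : 0 < a) (h1 : a < 1) {x0 : ℝ} (hmem : x0 ∈ Set.Icc (0:ℝ) 1)
    (hmax : ∀ x ∈ Set.Icc (0:ℝ) 1, g a x ≤ g a x0) :
    (1 / 4 < x0 ∧ x0 < 1 / 2) ∧ (1 - a) * x0 * (2 * x0 + 1) ^ 2 = 2 * (4 * x0 - 1) ∧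
      g a x0 = (4 * x0 - 1) * (2 * x0 + 1) / 4 ∧ (∀ t, 0 ≤ t → t < x0 → 0 ≤ Da a t) := by
  have hc : (0:ℝ) < 1 - a := by linarith
  -- positive value at 1/2
  have ghalf : 0 < g a (1/2) := by
    rw [g_eq h0 h1]
    have := Sa_pos h0 h1 (1/2)
    have h1S : (0:ℝ) < 1 + Sa a (1/2) := by linarith
    have hnum : (0:ℝ) < 8 * (1 - a) * (1/2) * (1 - 1/2) ^ 3 := by norm_num; linarith
    positivity
  have hmax2 := hmax (1/2) (by norm_num)
  have hgx0pos : 0 < g a x0 := lt_of_lt_of_le ghalf hmax2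
  have hx0pos : 0 < x0 := by
    rcases lt_or_eq_of_le hmem.1 with h | h
    · exact h
    · exfalso; rw [← h] at hgx0pos; simp [g] at hgx0pos
  have hx0lt1 : x0 < 1 := by
    rcases lt_or_eq_of_le hmem.2 with h | h
    · exact h
    · exfalso
      rw [h] at hgx0pos
      rw [g_eq h0 h1] at hgx0pos
      norm_num at hgx0pos
  -- x0 ≤ 1/2 by the reflection argument
  have hx0le : x0 ≤ 1/2 := by
    by_contra hgt
    push_neg at hgt
    have hmem' : 1 - x0 ∈ Set.Icc (0:ℝ) 1 := ⟨by linarith, by linarith⟩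
    have hrefl := hmax (1 - x0) hmem'
    rw [g_eq h0 h1, g_eq h0 h1, Sa_symm] at hrefl
    have hS := Sa_pos h0 h1 x0
    have h1S : (0:ℝ) < 1 + Sa a x0 := by linarith
    rw [div_le_div_iff₀ (by positivity) (by positivity)] at hrefl
    nlinarith [pow_pos h1S 3, mul_pos (mul_pos (mul_pos (by linarith : (0:ℝ) < 8 * (1-a))
      (by linarith : (0:ℝ) < x0 - (1 - x0))) hx0pos) (by linarith : (0:ℝ) < 1 - x0)]
  -- interior critical point
  have hDa0 : Da a x0 = 0 := by
    have hloc : IsLocalMax (g a) x0 := by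
      have hIoo : Set.Ioo (0:ℝ) 1 ∈ nhds x0 := Ioo_mem_nhds hx0pos hx0lt1
      filter_upwards [hIoo] with y hy using hmax y (Set.Ioo_subset_Icc_self hy)
    have := hloc.deriv_eq_zero
    rwa [(hasDerivAt_g h0 h1 x0).deriv] at this
  obtain ⟨hlin, hpoly⟩ := crit h0 h1 hx0pos hx0lt1 hDa0
  have hx0q : 1/4 < x0 := by
    nlinarith [mul_pos (mul_pos hc hx0pos) (by positivity : (0:ℝ) < (2*x0+1)^2)]
  have hx0half : x0 < 1/2 := by
    rcases lt_or_eq_of_le hx0le with h | h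
    · exact h
    · exfalso
      rw [h] at hpoly
      norm_num at hpoly
      linarith
  refine ⟨⟨hx0q, hx0half⟩, hpoly, ?_, ?_⟩
  · -- value of the maximum
    have h12 : (0:ℝ) < 1 + 2 * x0 := by linarith
    have h1S0 : 1 + Sa a x0 = (4 - 4 * x0) / (1 + 2 * x0) := by
      rw [eq_div_iff (ne_of_gt h12)]
      linear_combination hlin
    rw [g_eq h0 h1, h1S0, div_pow, div_div_eq_mul_div,
      div_eq_div_iff (ne_of_gt (pow_pos (by linarith : (0:ℝ) < 4 - 4 * x0) 3))
        (by norm_num : (4:ℝ) ≠ 0)]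
    linear_combination (32 * (1 - x0)^3 * (2*x0+1)) * hpoly
  · -- no critical point below x0
    intro t ht0 htx0
    by_contra hneg
    push_neg at hneg
    rcases lt_or_eq_of_le ht0 with htpos | hteq
    swap
    · rw [← hteq, Da_zero] at hneg; linarith
    have hcont : ContinuousOn (Da a) (Set.Icc 0 t) := (Da_cont h0 h1).continuousOn
    have hivt := intermediate_value_Ioo' (le_of_lt htpos) hcont
    have h0mem : (0:ℝ) ∈ Set.Ioo (Da a t) (Da a 0) := by
      rw [Da_zero]
      exact ⟨hneg, by linarith⟩
    obtain ⟨t1, ht1mem, ht1zero⟩ := hivt h0mem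
    obtain ⟨-, hpoly1⟩ := crit h0 h1 ht1mem.1 (by linarith [ht1mem.2] : t1 < 1) ht1zero
    have ht1lt : t1 < x0 := by linarith [ht1mem.2]
    have hW : 4 * (x0^2 + x0*t1 + t1^2) + 4 * (x0 + t1) + 1 < 8 := by
      nlinarith [ht1mem.1, ht1lt, hx0half]
    have h8 : 8 * (x0 - t1) = (1 - a) * (x0 - t1) *
        (4 * (x0^2 + x0*t1 + t1^2) + 4 * (x0 + t1) + 1) := by
      linear_combination hpoly1 - hpoly
    have hWpos : 0 < 4 * (x0^2 + x0*t1 + t1^2) + 4 * (x0 + t1) + 1 := by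
      nlinarith [ht1mem.1, sq_nonneg x0, sq_nonneg t1]
    nlinarith [mul_pos (by linarith : (0:ℝ) < x0 - t1) hWpos, h8, hW,
      mul_lt_mul_of_pos_left hW (by linarith : (0:ℝ) < x0 - t1)]

end Stmt4Aux

theorem stmt4 (α β : Fin 2 → ℝ) (hβ : ∀ j, 0 < β j) (hα : ∀ j, α j ∈ Set.Ico (0 : ℝ) 1)
    (i : Fin 2) (hαi : 0 < α i) (hφi : (1 - α i) * β i < 2 * Real.log 2)
    (x0 : ℝ) (hx0mem : x0 ∈ Set.Icc (0 : ℝ) 1)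
    (hx0max : ∀ x ∈ Set.Icc (0 : ℝ) 1, g (α i) x ≤ g (α i) x0)
    (hx0uniq : ∀ y ∈ Set.Icc (0 : ℝ) 1, (∀ x ∈ Set.Icc (0 : ℝ) 1, g (α i) x ≤ g (α i) y) → y = x0) :
    (∀ p : Fin 2 → ℝ, (∀ j, p j ∈ Set.Icc (0 : ℝ) 1) → p 0 + p 1 ≤ 1 →
      p i ≤ pbar (α i) → fm β i p < x0) ∧
    (∀ p : Fin 2 → ℝ, (∀ j, p j ∈ Set.Icc (0 : ℝ) (pbar (α j))) →
      0 ≤ deriv (g (α i)) (fm β i p)) := by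
  have h0 : 0 < α i := hαi
  have h1 : α i < 1 := (hα i).2
  obtain ⟨⟨hx0q, hx0half⟩, hpoly, hval, hmono⟩ := Stmt4Aux.main_ineq h0 h1 hx0mem hx0max
  have hpbar : pbar (α i) = g (α i) x0 := by
    apply IsGreatest.csSup_eq
    exact ⟨Set.mem_image_of_mem _ hx0mem, by rintro y ⟨x, hx, rfl⟩; exact hx0max x hx⟩
  have hpbarval : pbar (α i) = (4 * x0 - 1) * (2 * x0 + 1) / 4 := by rw [hpbar, hval]
  have hpbarpos : 0 < pbar (α i) := by rw [hpbarval]; nlinarith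
  have hc : (0:ℝ) < 1 - α i := by linarith
  have hcore : ∀ p : Fin 2 → ℝ, 0 ≤ p 0 → 0 ≤ p 1 → p i ≤ pbar (α i) →
      0 ≤ fm β i p ∧ fm β i p < x0 := by
    intro p hp0 hp1 hpile
    by_cases hSg : β 0 * p 0 + β 1 * p 1 = 0
    · rw [fm, if_pos hSg]
      exact ⟨le_refl 0, by linarith⟩
    · have hSgnn : 0 ≤ β 0 * p 0 + β 1 * p 1 :=
        add_nonneg (mul_nonneg (hβ 0).le hp0) (mul_nonneg (hβ 1).le hp1)
      have hSgpos : 0 < β 0 * p 0 + β 1 * p 1 := lt_of_le_of_ne hSgnn (Ne.symm hSg)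
      rw [fm, if_neg hSg]
      have hE1 : Real.exp (-(β 0 * p 0 + β 1 * p 1)) < 1 := by
        rw [Real.exp_lt_one_iff]; linarith
      have hble : β i * p i ≤ β 0 * p 0 + β 1 * p 1 := by
        have hi : i = 0 ∨ i = 1 := by omega
        rcases hi with rfl | rfl
        · nlinarith [mul_nonneg (hβ 1).le hp1]
        · nlinarith [mul_nonneg (hβ 0).le hp0]
      have hbnn : 0 ≤ β i * p i := by
        have hi : i = 0 ∨ i = 1 := by omega
        rcases hi with rfl | rfl
        · exact mul_nonneg (hβ 0).le hp0
        · exact mul_nonneg (hβ 1).le hp1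
      refine ⟨div_nonneg (mul_nonneg (by linarith) hbnn) hSgnn, ?_⟩
      rcases lt_or_eq_of_le hbnn with hbpos | hbeq
      swap
      · rw [← hbeq, mul_zero, zero_div]; linarith
      have step1 := Stmt4Aux.exp_frac hbpos hble
      have hβlt : β i * p i < 2 * Real.log 2 * pbar (α i) / (1 - α i) := by
        have ha1 : β i * p i ≤ β i * pbar (α i) := mul_le_mul_of_nonneg_left hpile (hβ i).le
        have ha2 : β i * pbar (α i) < (2 * Real.log 2 / (1 - α i)) * pbar (α i) := by
          apply mul_lt_mul_of_pos_right _ hpbarpos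
          rw [lt_div_iff₀ hc]
          nlinarith [hφi]
        rw [div_mul_eq_mul_div] at ha2
        linarith
      have hkey : 2 * Real.log 2 * pbar (α i) / (1 - α i) ≤ -Real.log (1 - x0) := by
        rw [div_le_iff₀ hc, hpbarval]
        have hli := Stmt4Aux.log_ineq hx0q hx0half
        have hident : 2 * Real.log 2 * ((4 * x0 - 1) * (2 * x0 + 1) / 4)
            = ((1 - α i) / 4) * (Real.log 2 * (x0 * (2 * x0 + 1) ^ 3)) := by
          linear_combination (-(Real.log 2 * (2 * x0 + 1) / 4)) * hpoly
        rw [hident]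
        have hstep := mul_le_mul_of_nonneg_left hli (by linarith : (0:ℝ) ≤ (1 - α i) / 4)
        linarith
      have hfinal : 1 - Real.exp (-(β i * p i)) < x0 := by
        have hexp : Real.exp (Real.log (1 - x0)) = 1 - x0 := Real.exp_log (by linarith)
        have hlt : Real.log (1 - x0) < -(β i * p i) := by linarith
        have := Real.exp_lt_exp.2 hlt
        rw [hexp] at this
        linarith
      linarith [step1]
  constructor
  · intro p hp _ hpile
    exact (hcore p (hp 0).1 (hp 1).1 hpile).2
  · intro p hp
    obtain ⟨hnn, hlt⟩ := hcore p (hp 0).1 (hp 1).1 (hp i).2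
    rw [(Stmt4Aux.hasDerivAt_g h0 h1 (fm β i p)).deriv]
    exact hmono _ hnn hlt
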